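/- (Low-Rank Representer Theorem.) Let X be a separable real Hilbert space, let φ_1, …, φ_n ∈ X, let d be a positive integer, and let ψ̃_1, …, ψ̃_n ∈ X be linearly independent vectors with span{ψ̃_1, …, ψ̃_n} = span{φ_1, …, φ_n}. Define the coordinate vectors φ̃_i = (⟪φ_i, ψ̃_1⟫, …, ⟪φ_i, ψ̃_n⟫) ∈ ℝ^n. Then for every function f : Matrix (Fin n) (Fin n) ℝ → ℝ, the infimum of f((⟪A φ_i, A φ_j⟫)_{i,j}) over all bounded linear maps A : X → ℝ^d (with ℝ^d carrying the Euclidean inner product) equals the infimum of f((φ̃_i^T (A'^T A') φ̃_j)_{i,j}) over all real d × n matrices A'. -/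

import Mathlib

open scoped RealInnerProductSpace Matrix

private lemma dot_aux {n d : ℕ} (A' : Matrix (Fin d) (Fin n) ℝ) (x y : Fin n → ℝ) :
    x ⬝ᵥ ((A'ᵀ * A') *ᵥ y) = (A' *ᵥ x) ⬝ᵥ (A' *ᵥ y) := by
  rw [← Matrix.mulVec_mulVec, Matrix.dotProduct_mulVec, Matrix.vecMul_transpose]

/-- Low-Rank Representer Theorem. -/
theorem stmt3 {X : Type*}
    [NormedAddCommGroup X] [InnerProductSpace ℝ X] [CompleteSpace X]
    [TopologicalSpace.SeparableSpace X]
    {n d : ℕ} (hd : 0 < d) (φ ψ : Fin n → X)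
    (hind : LinearIndependent ℝ ψ)
    (hspan : Submodule.span ℝ (Set.range ψ) = Submodule.span ℝ (Set.range φ))
    (φt : Fin n → Fin n → ℝ) (hφt : ∀ i k, φt i k = ⟪φ i, ψ k⟫)
    (f : Matrix (Fin n) (Fin n) ℝ → ℝ) :
    ⨅ A : X →L[ℝ] EuclideanSpace ℝ (Fin d),
        f (Matrix.of fun i j => ⟪A (φ i), A (φ j)⟫) =
      ⨅ A' : Matrix (Fin d) (Fin n) ℝ,
        f (Matrix.of fun i j => φt i ⬝ᵥ ((A'ᵀ * A') *ᵥ φt j)) := by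
  -- coefficients of φ i in terms of ψ
  have hc : ∀ i, ∃ c : Fin n → ℝ, ∑ k, c k • ψ k = φ i := by
    intro i
    rw [← Submodule.mem_span_range_iff_exists_fun ℝ, hspan]
    exact Submodule.subset_span ⟨i, rfl⟩
  choose c hcc using hc
  -- Gram matrix of ψ
  set G : Matrix (Fin n) (Fin n) ℝ := Matrix.of fun k l => ⟪ψ k, ψ l⟫ with hG
  have hdot : ∀ v w : Fin n → ℝ, v ⬝ᵥ (G *ᵥ w) = ⟪∑ k, v k • ψ k, ∑ l, w l • ψ l⟫ := by
    intro v w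
    simp only [dotProduct, Matrix.mulVec, dotProduct, hG, Matrix.of_apply,
      sum_inner, inner_sum, real_inner_smul_left, real_inner_smul_right, Finset.mul_sum]
    rw [Finset.sum_comm]
    refine Finset.sum_congr rfl fun k _ => Finset.sum_congr rfl fun l _ => ?_
    ring
  have hinj : Function.Injective (Matrix.mulVecLin G) := by
    rw [← LinearMap.ker_eq_bot, LinearMap.ker_eq_bot']
    intro v hv
    have h0 : (⟪∑ k, v k • ψ k, ∑ l, v l • ψ l⟫ : ℝ) = 0 := by
      rw [← hdot]
      simp [Matrix.mulVecLin_apply] at hv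
      simp [hv]
    have h1 : ∑ k, v k • ψ k = 0 := inner_self_eq_zero.mp h0
    funext k
    exact Fintype.linearIndependent_iff.mp hind v h1 k
  have hsurj : Function.Surjective (Matrix.mulVecLin G) :=
    LinearMap.injective_iff_surjective.mp hinj
  set e : (Fin n → ℝ) ≃ₗ[ℝ] (Fin n → ℝ) :=
    LinearEquiv.ofBijective (Matrix.mulVecLin G) ⟨hinj, hsurj⟩ with he
  set C : Matrix (Fin n) (Fin n) ℝ := LinearMap.toMatrix' (e.symm : (Fin n → ℝ) →ₗ[ℝ] (Fin n → ℝ)) with hCdef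
  have hC : ∀ v, C *ᵥ v = e.symm v := by
    intro v
    rw [← Matrix.toLin'_apply, hCdef, Matrix.toLin'_toMatrix']
    rfl
  have hGc : ∀ i, G *ᵥ c i = φt i := by
    intro i
    funext k
    have : (G *ᵥ c i) k = ⟪ψ k, ∑ l, c i l • ψ l⟫ := by
      simp [Matrix.mulVec, dotProduct, hG, inner_sum, real_inner_smul_right, mul_comm]
    rw [this, hcc i, hφt, real_inner_comm]
  have hCφt : ∀ i, C *ᵥ φt i = c i := by
    intro i
    rw [hC, ← hGc i]
    have : G *ᵥ c i = e (c i) := rfl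
    rw [this, LinearEquiv.symm_apply_apply]
  -- range equality
  have key : (Set.range fun A : X →L[ℝ] EuclideanSpace ℝ (Fin d) =>
        (Matrix.of fun i j => ⟪A (φ i), A (φ j)⟫ : Matrix (Fin n) (Fin n) ℝ))
      = Set.range fun A' : Matrix (Fin d) (Fin n) ℝ =>
        (Matrix.of fun i j => φt i ⬝ᵥ ((A'ᵀ * A') *ᵥ φt j) : Matrix (Fin n) (Fin n) ℝ) := by
    apply Set.Subset.antisymm
    · rintro _ ⟨A, rfl⟩
      set B : Matrix (Fin d) (Fin n) ℝ := Matrix.of fun r k => A (ψ k) r with hBdef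
      refine ⟨B * C, ?_⟩
      have hB : ∀ i, B *ᵥ c i = fun r => A (φ i) r := by
        intro i
        funext r
        have : A (φ i) = ∑ k, c i k • A (ψ k) := by
          rw [← hcc i, map_sum]
          simp
        have h2 : (∑ k, c i k • A (ψ k)) r = ∑ k, (c i k • A (ψ k)) r :=
          by rw [WithLp.ofLp_sum, Finset.sum_apply]
        rw [this, h2]
        simp [Matrix.mulVec, dotProduct, hBdef, PiLp.smul_apply, smul_eq_mul, mul_comm]
      funext i j
      simp only [Matrix.of_apply]
      rw [dot_aux, ← Matrix.mulVec_mulVec, ← Matrix.mulVec_mulVec, hCφt, hCφt, hB, hB]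
      simp [PiLp.inner_apply, RCLike.inner_apply, dotProduct, mul_comm]
    · rintro _ ⟨A', rfl⟩
      refine ⟨((EuclideanSpace.equiv (Fin d) ℝ).symm : (Fin d → ℝ) →L[ℝ] EuclideanSpace ℝ (Fin d)).comp
        (ContinuousLinearMap.pi fun r => innerSL ℝ (∑ k, A' r k • ψ k)), ?_⟩
      funext i j
      simp only [Matrix.of_apply]
      have hA : ∀ i r, (((EuclideanSpace.equiv (Fin d) ℝ).symm : (Fin d → ℝ) →L[ℝ] EuclideanSpace ℝ (Fin d)).comp
          (ContinuousLinearMap.pi fun r => innerSL ℝ (∑ k, A' r k • ψ k))) (φ i) r = (A' *ᵥ φt i) r := by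
        intro i r
        simp [EuclideanSpace.equiv, WithLp.equiv_symm_apply, sum_inner, real_inner_smul_left,
          Matrix.mulVec, dotProduct, hφt, real_inner_comm]
      rw [dot_aux]
      simp only [PiLp.inner_apply, RCLike.inner_apply, conj_trivial]
      rw [dotProduct]
      exact Finset.sum_congr rfl fun r _ => by rw [hA i r, hA j r, mul_comm]
  -- conclude
  rw [iInf, iInf]
  congr 1
  have h1 : (Set.range fun A : X →L[ℝ] EuclideanSpace ℝ (Fin d) =>
      f (Matrix.of fun i j => ⟪A (φ i), A (φ j)⟫)) = f '' (Set.range fun A : X →L[ℝ] EuclideanSpace ℝ (Fin d) =>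
        (Matrix.of fun i j => ⟪A (φ i), A (φ j)⟫ : Matrix (Fin n) (Fin n) ℝ)) := by
    rw [← Set.range_comp]; rfl
  have h2 : (Set.range fun A' : Matrix (Fin d) (Fin n) ℝ =>
      f (Matrix.of fun i j => φt i ⬝ᵥ ((A'ᵀ * A') *ᵥ φt j))) = f '' (Set.range fun A' : Matrix (Fin d) (Fin n) ℝ =>
        (Matrix.of fun i j => φt i ⬝ᵥ ((A'ᵀ * A') *ᵥ φt j) : Matrix (Fin n) (Fin n) ℝ)) := by
    rw [← Set.range_comp]; rfl
  rw [h1, h2, key]
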